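/- arXiv:1401.1156 — 2 statements merged into one kernel-verified Lean document; each statement's English description precedes it below -/
import Mathlib

section
/- Let U be a topological space, α < β index sets (with α embedded in β), define I_k on subsets of U^α and on subsets of U^β as the k-th interior operator induced by the topology on U. Let f : P(U^α) → P(U^β) be defined by f(X) = { s ∈ U^β : s↾α ∈ X }. Then f(I_k(X)) = I_k(f(X)) for all X ⊆ U^α and k ∈ α. -/
/-- The `k`-th interior operator on subsets of `ι → U` induced by a topology on `U`. -/
def intOp {ι U : Type*} [DecidableEq ι] [TopologicalSpace U]
    (k : ι) (X : Set (ι → U)) : Set (ι → U) :=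
  {s | s k ∈ interior {a : U | Function.update s k a ∈ X}}

/-- The natural (neat) embedding `f(X) = { s : β → U | s↾α ∈ X }`, along an
embedding `e : α ↪ β` of index sets, commutes with the interior operators:
`f(I_k X) = I_{e k}(f X)`. -/
theorem stmt_10 {α β U : Type*} [DecidableEq α] [DecidableEq β] [TopologicalSpace U]
    (e : α ↪ β) (k : α) (X : Set (α → U)) :
    {s : β → U | (fun i => s (e i)) ∈ intOp k X} =
      intOp (e k) {s : β → U | (fun i => s (e i)) ∈ X} := by
  ext s
  have h : ∀ a : U, (fun i => Function.update s (e k) a (e i)) =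
      Function.update (fun i => s (e i)) k a := by
    intro a
    funext i
    by_cases hi : i = k
    · subst hi; simp
    · rw [Function.update_of_ne (fun h => hi (e.injective h)),
        Function.update_of_ne hi]
  simp only [intOp, Set.mem_setOf_eq, h]
end

section
/- Let U be a topological space, α an infinite index set, p ∈ U^α, and let W = { s ∈ U^α : s(i) ≠ p(i) for only finitely many i } be the weak space determined by p. For k ∈ α define I_k(X) = { s ∈ W : s(k) ∈ int { a ∈ U : s[k↦a] ∈ X } } for X ⊆ W. Then I_k is an interior operator on P(W): it satisfies I_k(X) ⊆ X, I_k(X ∩ Y) = I_k(X) ∩ I_k(Y), I_k(X) ⊆ I_k(I_k(X)), and I_k(W) = W. -/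
/-- The weak space of dimension `α` with base `U` determined by `p`: all sequences
differing from `p` in only finitely many coordinates. -/
def weakSpace {α U : Type*} (p : α → U) : Set (α → U) :=
  {s | {i : α | s i ≠ p i}.Finite}

/-- The `k`-th interior operator on subsets of the weak space determined by `p`. -/
def intOpW {α U : Type*} [DecidableEq α] [TopologicalSpace U] (p : α → U)
    (k : α) (X : Set (α → U)) : Set (α → U) :=
  {s | s ∈ weakSpace p ∧ s k ∈ interior {a : U | Function.update s k a ∈ X}}

lemma update_mem_weakSpace {α U : Type*} [DecidableEq α] {p : α → U} {s : α → U}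
    (hs : s ∈ weakSpace p) (k : α) (a : U) : Function.update s k a ∈ weakSpace p := by
  refine Set.Finite.subset (hs.union (Set.finite_singleton k)) ?_
  intro i hi
  by_cases hik : i = k
  · exact Or.inr hik
  · left
    simpa [Function.update_of_ne hik] using hi

/-- On a weak space over an infinite index set, `I_k` is an interior operator:
decreasing, meet-preserving, idempotent-increasing, and unital. -/
theorem stmt_15 {α U : Type*} [DecidableEq α] [Infinite α] [TopologicalSpace U]
    (p : α → U) (k : α) (X Y : Set (α → U))
    (hX : X ⊆ weakSpace p) (hY : Y ⊆ weakSpace p) :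
    intOpW p k X ⊆ X ∧
    intOpW p k (X ∩ Y) = intOpW p k X ∩ intOpW p k Y ∧
    intOpW p k X ⊆ intOpW p k (intOpW p k X) ∧
    intOpW p k (weakSpace p) = weakSpace p := by
  refine ⟨?_, ?_, ?_, ?_⟩
  · intro s hs
    have := interior_subset hs.2
    simpa [Function.update_eq_self] using this
  · ext s
    constructor
    · rintro ⟨hw, hmem⟩
      have : s k ∈ interior ({a : U | Function.update s k a ∈ X} ∩
          {a : U | Function.update s k a ∈ Y}) := by
        exact hmem
      rw [interior_inter] at this
      exact ⟨⟨hw, this.1⟩, ⟨hw, this.2⟩⟩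
    · rintro ⟨⟨hw, h1⟩, ⟨_, h2⟩⟩
      refine ⟨hw, ?_⟩
      have : s k ∈ interior ({a : U | Function.update s k a ∈ X} ∩
          {a : U | Function.update s k a ∈ Y}) := by
        rw [interior_inter]; exact ⟨h1, h2⟩
      exact this
  · rintro s ⟨hw, hmem⟩
    refine ⟨hw, ?_⟩
    have hset : {a : U | Function.update s k a ∈ intOpW p k X} =
        interior {a : U | Function.update s k a ∈ X} := by
      ext a
      simp only [Set.mem_setOf_eq, intOpW, Function.update_idem, Function.update_self]
      constructor
      · rintro ⟨_, h⟩; exact h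
      · intro h; exact ⟨update_mem_weakSpace hw k a, h⟩
    rw [hset, interior_interior]
    exact hmem
  · ext s
    constructor
    · rintro ⟨hw, _⟩; exact hw
    · intro hw
      refine ⟨hw, ?_⟩
      have : {a : U | Function.update s k a ∈ weakSpace p} = Set.univ := by
        ext a; simp [update_mem_weakSpace hw k a]
      rw [this, interior_univ]; trivial
end
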